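/- Let d = p² with p prime. Then KD^r = span_ℝ(A ∪ B ∪ C) if and only if KD⁺ = ConvHull(A ∪ B ∪ C). -/

import Mathlib

open Complex Matrix
open scoped ComplexOrder

noncomputable section

/-- `omega n = exp(2 π i / n)`, a primitive `n`-th root of unity. -/
def omega (n : ℕ) : ℂ := Complex.exp (2 * Real.pi * Complex.I / n)

/-- The standard basis vector `a i` of `ℂ^d`. -/
def stdVec (d : ℕ) (i : Fin d) : Fin d → ℂ := fun k => if k = i then 1 else 0

/-- The Fourier (DFT) basis vector `b j = (1/√d) ∑ i, ω_d^(i j) • a i`. -/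
def fourierVec (d : ℕ) (j : Fin d) : Fin d → ℂ :=
  fun i => ((1 / Real.sqrt d : ℝ) : ℂ) * omega d ^ (i.val * j.val)

/-- The rank-one projector `|v⟩⟨v|` of a vector `v`, as a matrix. -/
def proj (d : ℕ) (v : Fin d → ℂ) : Matrix (Fin d) (Fin d) ℂ :=
  Matrix.of fun i k => v i * (starRingEnd ℂ) (v k)

/-- The Kirkwood-Dirac quasiprobability `Q i j F = ⟨b j|a i⟩ * ⟨a i|F|b j⟩`. -/
def KDQ (d : ℕ) (F : Matrix (Fin d) (Fin d) ℂ) (i j : Fin d) : ℂ :=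
  (starRingEnd ℂ) (fourierVec d j i) * ∑ k, F i k * fourierVec d j k

/-- The set `KD⁺` of KD classical density matrices: positive semidefinite, trace one,
and all KD quasiprobabilities are nonnegative reals. -/
def KDplus (d : ℕ) : Set (Matrix (Fin d) (Fin d) ℂ) :=
  {ρ | ρ.PosSemidef ∧ ρ.trace = 1 ∧
    ∀ i j, (KDQ d ρ i j).im = 0 ∧ 0 ≤ (KDQ d ρ i j).re}

/-- The set `KD^r` of self-adjoint operators whose KD distribution is everywhere real. -/
def KDr (d : ℕ) : Set (Matrix (Fin d) (Fin d) ℂ) :=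
  {F | F.IsHermitian ∧ ∀ i j, (KDQ d F i j).im = 0}

/-- `A = {|a i⟩⟨a i| : i ∈ ℤ_d}`. -/
def setA (d : ℕ) : Set (Matrix (Fin d) (Fin d) ℂ) :=
  {M | ∃ i : Fin d, M = proj d (stdVec d i)}

/-- `B = {|b j⟩⟨b j| : j ∈ ℤ_d}`. -/
def setB (d : ℕ) : Set (Matrix (Fin d) (Fin d) ℂ) :=
  {M | ∃ j : Fin d, M = proj d (fourierVec d j)}

/-- For `d = p * q` : `ψ m s = (1/√q) ∑ k ∈ ℤ_q, ω_q^(s k) • a (k p + m)`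
(so the `i`-th coordinate is nonzero iff `i ≡ m [MOD p]`, with `k = i / p`). -/
def psiPQ (d p q : ℕ) (m : Fin p) (s : Fin q) : Fin d → ℂ :=
  fun i => if i.val % p = m.val then
    ((1 / Real.sqrt q : ℝ) : ℂ) * omega q ^ (s.val * (i.val / p)) else 0

/-- For `d = p * q` : `φ m' s' = (1/√p) ∑ k ∈ ℤ_p, ω_p^(s' k) • a (k q + m')`. -/
def phiPQ (d p q : ℕ) (m' : Fin q) (s' : Fin p) : Fin d → ℂ :=
  fun i => if i.val % q = m'.val then
    ((1 / Real.sqrt p : ℝ) : ℂ) * omega p ^ (s'.val * (i.val / q)) else 0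

/-- For `d = p ^ 2` : `C = {|ψ m s⟩⟨ψ m s| : m, s ∈ ℤ_p}`. -/
def setC2 (d p : ℕ) : Set (Matrix (Fin d) (Fin d) ℂ) :=
  {M | ∃ m s : Fin p, M = proj d (psiPQ d p p m s)}

/-- For `d = p * q` : `C = {|ψ m s⟩⟨ψ m s| : m ∈ ℤ_p, s ∈ ℤ_q}`. -/
def setC (d p q : ℕ) : Set (Matrix (Fin d) (Fin d) ℂ) :=
  {M | ∃ (m : Fin p) (s : Fin q), M = proj d (psiPQ d p q m s)}

/-- For `d = p * q` : `D = {|φ m' s'⟩⟨φ m' s'| : m' ∈ ℤ_q, s' ∈ ℤ_p}`. -/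
def setD (d p q : ℕ) : Set (Matrix (Fin d) (Fin d) ℂ) :=
  {M | ∃ (m' : Fin q) (s' : Fin p), M = proj d (phiPQ d p q m' s')}

/-- Matrix entries in the Fourier basis: `⟨b k|G|b j⟩`. -/
def entryB (d : ℕ) (G : Matrix (Fin d) (Fin d) ℂ) (k j : Fin d) : ℂ :=
  ∑ i, ∑ l, (starRingEnd ℂ) (fourierVec d k i) * G i l * fourierVec d j l


lemma omega_ne_zero (n : ℕ) : omega n ≠ 0 := Complex.exp_ne_zero _

lemma omega_prim {n : ℕ} (hn : n ≠ 0) : IsPrimitiveRoot (omega n) n :=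
  Complex.isPrimitiveRoot_exp n hn

lemma conj_omega (n : ℕ) : (starRingEnd ℂ) (omega n) = (omega n)⁻¹ := by
  rw [omega, ← Complex.exp_conj, ← Complex.exp_neg]
  congr 1
  have : (starRingEnd ℂ) 2 = 2 := map_ofNat _ 2
  simp [map_div₀, Complex.conj_I, this]
  ring

lemma conj_omega_zpow (n : ℕ) (t : ℤ) :
    (starRingEnd ℂ) (omega n ^ t) = omega n ^ (-t) := by
  rw [map_zpow₀, conj_omega, _root_.inv_zpow, ← _root_.zpow_neg]

lemma omega_zpow_eq_one {n : ℕ} (hn : n ≠ 0) {t : ℤ} (h : (n : ℤ) ∣ t) :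
    omega n ^ t = 1 := ((omega_prim hn).zpow_eq_one_iff_dvd t).2 h

lemma omega_geom_sum {n : ℕ} (hn : n ≠ 0) (t : ℤ) :
    ∑ k : Fin n, omega n ^ ((k : ℤ) * t) = if (n : ℤ) ∣ t then (n : ℂ) else 0 := by
  have hterm : ∀ k : Fin n, omega n ^ ((k : ℤ) * t) = (omega n ^ t) ^ (k : ℕ) := by
    intro k
    rw [mul_comm, _root_.zpow_mul, zpow_natCast]
  simp only [hterm]
  by_cases h : (n : ℤ) ∣ t
  · simp [omega_zpow_eq_one hn h, if_pos h]
  · rw [if_neg h]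
    have hx : omega n ^ t ≠ 1 := fun hx => h (((omega_prim hn).zpow_eq_one_iff_dvd t).1 hx)
    rw [Fin.sum_univ_eq_sum_range, geom_sum_eq hx]
    have : (omega n ^ t) ^ n = 1 := by
      rw [← zpow_natCast, ← _root_.zpow_mul, mul_comm, _root_.zpow_mul, (omega_prim hn).zpow_eq_one, _root_.one_zpow]
    rw [this]
    simp

lemma omega_sq_pow {p : ℕ} (hp : p ≠ 0) (t : ℤ) :
    omega (p ^ 2) ^ ((p : ℤ) * t) = omega p ^ t := by
  have h : omega (p ^ 2) ^ (p : ℤ) = omega p := by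
    rw [zpow_natCast, omega, omega, ← Complex.exp_nat_mul]
    congr 1
    have hp' : (p : ℂ) ≠ 0 := Nat.cast_ne_zero.2 hp
    push_cast
    field_simp
  rw [_root_.zpow_mul, h]

lemma fin_dvd_iff {n : ℕ} (a b : Fin n) : (n : ℤ) ∣ ((a.val : ℤ) - (b.val : ℤ)) ↔ a = b := by
  constructor
  · intro h
    have hab : ((a.val : ℤ) - b.val) = 0 := by
      refine Int.eq_zero_of_abs_lt_dvd h ?_
      have ha : (a.val : ℤ) < n := by exact_mod_cast a.isLt
      have hb : (b.val : ℤ) < n := by exact_mod_cast b.isLt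
      have ha0 : (0 : ℤ) ≤ (a.val:ℤ) := Int.natCast_nonneg _
      have hb0 : (0 : ℤ) ≤ (b.val:ℤ) := Int.natCast_nonneg _
      rw [abs_sub_lt_iff]
      omega
    have : (a.val : ℤ) = b.val := by omega
    exact Fin.ext (by exact_mod_cast this)
  · rintro rfl; simp

lemma mod_dvd_iff {n p : ℕ} (hp : 0 < p) (j : Fin n) (s : Fin p) :
    (p : ℤ) ∣ ((j.val : ℤ) - (s.val : ℤ)) ↔ j.val % p = s.val := by
  rw [← Nat.modEq_iff_dvd]
  unfold Nat.ModEq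
  rw [Nat.mod_eq_of_lt s.isLt]
  exact eq_comm

lemma sqrt_term_sq (n : ℕ) :
    ((1 / Real.sqrt n : ℝ) : ℂ) * ((1 / Real.sqrt n : ℝ) : ℂ) = ((n : ℂ))⁻¹ := by
  rw [← Complex.ofReal_mul]
  have : (1 / Real.sqrt n) * (1 / Real.sqrt n) = (n : ℝ)⁻¹ := by
    rw [div_mul_div_comm, one_mul, Real.mul_self_sqrt (Nat.cast_nonneg n), one_div]
  rw [this]
  push_cast
  ring



/-- `fe p k m` is the element `m + k*p` of `Fin (p^2)`. -/
def fe (p : ℕ) (k m : Fin p) : Fin (p ^ 2) :=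
  ⟨m.val + k.val * p, by
    have h1 : m.val + k.val * p < p + k.val * p := by
      have := m.isLt; omega
    have h2 : p + k.val * p ≤ p * p := by
      have hk : k.val + 1 ≤ p := k.isLt
      calc p + k.val * p = (k.val + 1) * p := by ring
        _ ≤ p * p := Nat.mul_le_mul_right p hk
    have := h1.trans_le h2
    simpa [pow_two] using this⟩

lemma fe_mod {p : ℕ} (k m : Fin p) : (fe p k m).val % p = m.val := by
  simp [fe, Nat.add_mul_mod_self_right, Nat.mod_eq_of_lt m.isLt]

lemma fe_div {p : ℕ} (hp : 0 < p) (k m : Fin p) : (fe p k m).val / p = k.val := by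
  simp [fe, Nat.add_mul_div_right _ _ hp, Nat.div_eq_of_lt m.isLt]

def gridEquiv (p : ℕ) (hp : 0 < p) : Fin p × Fin p ≃ Fin (p ^ 2) where
  toFun x := fe p x.1 x.2
  invFun i := (⟨i.val / p, by
      have := i.isLt
      exact Nat.div_lt_iff_lt_mul hp |>.2 (by rwa [← pow_two])⟩,
    ⟨i.val % p, Nat.mod_lt _ hp⟩)
  left_inv x := by
    ext
    · simp [fe_div hp]
    · simp [fe_mod]
  right_inv i := by
    ext
    simp [fe]
    exact Nat.mod_add_div' i.val p

lemma sum_grid {p : ℕ} (hp : 0 < p) {M : Type*} [AddCommMonoid M] (f : Fin (p ^ 2) → M) :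
    ∑ i, f i = ∑ k : Fin p, ∑ m : Fin p, f (fe p k m) := by
  rw [← Equiv.sum_comp (gridEquiv p hp) f, Fintype.sum_prod_type]
  rfl

lemma fe_eq_self {p : ℕ} (hp : 0 < p) (i : Fin (p ^ 2)) :
    fe p ⟨i.val / p, by
      have := i.isLt; exact Nat.div_lt_iff_lt_mul hp |>.2 (by rwa [← pow_two])⟩
      ⟨i.val % p, Nat.mod_lt _ hp⟩ = i :=
  (gridEquiv p hp).right_inv i

lemma omega_zpow_add (n : ℕ) (a b : ℤ) : omega n ^ a * omega n ^ b = omega n ^ (a + b) :=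
  (zpow_add₀ (omega_ne_zero n) a b).symm

lemma omega_neg_mul (n : ℕ) (t : ℤ) : omega n ^ (-t) * omega n ^ t = 1 := by
  rw [omega_zpow_add]; simp

lemma conj_omega_pow (n : ℕ) (e : ℕ) :
    (starRingEnd ℂ) (omega n ^ e) = omega n ^ (-(e : ℤ)) := by
  rw [← zpow_natCast (omega n), conj_omega_zpow]

lemma conj_fourier_mul_self {d : ℕ} (j i : Fin d) :
    (starRingEnd ℂ) (fourierVec d j i) * fourierVec d j i = ((d : ℂ))⁻¹ := by
  unfold fourierVec
  rw [_root_.map_mul, Complex.conj_ofReal, conj_omega_pow,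
    show (((1 / Real.sqrt d : ℝ) : ℂ) * omega d ^ (-((i.val * j.val : ℕ) : ℤ))) *
        (((1 / Real.sqrt d : ℝ) : ℂ) * omega d ^ ((i.val * j.val : ℕ))) =
      (((1 / Real.sqrt d : ℝ) : ℂ) * ((1 / Real.sqrt d : ℝ) : ℂ)) *
        (omega d ^ (-((i.val * j.val : ℕ) : ℤ)) * omega d ^ ((i.val * j.val : ℕ) : ℤ)) by
      rw [← zpow_natCast (omega d) (i.val * j.val)]; ring]
  rw [omega_neg_mul, sqrt_term_sq, mul_one]

lemma KDQ_projA {d : ℕ} (i0 i j : Fin d) :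
    KDQ d (proj d (stdVec d i0)) i j = if i = i0 then ((d : ℂ))⁻¹ else 0 := by
  unfold KDQ proj stdVec
  simp only [Matrix.of_apply]
  by_cases hi : i = i0
  · subst hi
    rw [if_pos rfl, Finset.sum_eq_single i]
    · simp only [eq_self_iff_true, if_true, _root_.map_one, one_mul, mul_one]
      exact conj_fourier_mul_self j i
    · intro k _ hk
      simp [hk]
    · simp
  · simp [hi]

lemma KDQ_projB {d : ℕ} (hd : d ≠ 0) (j0 i j : Fin d) :
    KDQ d (proj d (fourierVec d j0)) i j = if j = j0 then ((d : ℂ))⁻¹ else 0 := by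
  have hω := omega_ne_zero d
  have hr2 : ((1 / Real.sqrt d : ℝ) : ℂ) * ((1 / Real.sqrt d : ℝ) : ℂ) = ((d : ℂ))⁻¹ :=
    sqrt_term_sq d
  set r : ℂ := ((1 / Real.sqrt d : ℝ) : ℂ) with hr
  unfold KDQ proj
  simp only [Matrix.of_apply]
  have hterm : ∀ k : Fin d,
      (fourierVec d j0 i * (starRingEnd ℂ) (fourierVec d j0 k)) * fourierVec d j k
      = (r * r * r * omega d ^ ((i.val : ℤ) * (j0.val : ℤ))) *
          omega d ^ ((k.val : ℤ) * ((j.val : ℤ) - (j0.val : ℤ))) := by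
    intro k
    unfold fourierVec
    rw [_root_.map_mul, Complex.conj_ofReal, conj_omega_pow]
    rw [← zpow_natCast (omega d) (i.val * j0.val), ← zpow_natCast (omega d) (k.val * j.val)]
    rw [mul_sub, zpow_sub₀ hω, ← hr]
    push_cast
    rw [_root_.zpow_neg]
    have h1 : omega d ^ ((k.val : ℤ) * (j0.val : ℤ)) ≠ 0 := zpow_ne_zero _ hω
    field_simp
  rw [Finset.sum_congr rfl (fun k _ => hterm k), ← Finset.mul_sum, omega_geom_sum hd]
  by_cases hj : j = j0
  · subst hj
    rw [if_pos ((fin_dvd_iff j j).2 rfl), if_pos rfl]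
    unfold fourierVec
    rw [_root_.map_mul, Complex.conj_ofReal, conj_omega_pow, ← hr]
    push_cast
    rw [show r * omega d ^ (-((i.val : ℤ) * (j.val : ℤ))) *
        (r * r * r * omega d ^ ((i.val : ℤ) * (j.val : ℤ)) * (d : ℂ)) =
        ((r * r) * (r * r)) * (omega d ^ (-((i.val : ℤ) * (j.val : ℤ))) *
          omega d ^ ((i.val : ℤ) * (j.val : ℤ))) * (d : ℂ) by ring]
    rw [omega_neg_mul, hr2, mul_one]
    have hdc : (d : ℂ) ≠ 0 := Nat.cast_ne_zero.2 hd
    field_simp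
  · rw [if_neg (fun h => hj ((fin_dvd_iff j j0).1 h)), if_neg hj]
    simp

lemma KDQ_projC {p : ℕ} (hp : 0 < p) (m s : Fin p) (i j : Fin (p ^ 2)) :
    KDQ (p ^ 2) (proj (p ^ 2) (psiPQ (p ^ 2) p p m s)) i j =
      if i.val % p = m.val ∧ j.val % p = s.val then (((p ^ 2 : ℕ) : ℂ))⁻¹ else 0 := by
  have hp0 : p ≠ 0 := hp.ne'
  have hd : (p ^ 2) ≠ 0 := pow_ne_zero 2 hp0
  have hω : omega (p ^ 2) ≠ 0 := omega_ne_zero _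
  have hωp : omega p ≠ 0 := omega_ne_zero _
  have hrp2 : ((1 / Real.sqrt p : ℝ) : ℂ) * ((1 / Real.sqrt p : ℝ) : ℂ) = ((p : ℂ))⁻¹ :=
    sqrt_term_sq p
  have hr2 : ((1 / Real.sqrt (p ^ 2 : ℕ) : ℝ) : ℂ) * ((1 / Real.sqrt (p ^ 2 : ℕ) : ℝ) : ℂ)
      = (((p ^ 2 : ℕ) : ℂ))⁻¹ := sqrt_term_sq (p ^ 2)
  set rp : ℂ := ((1 / Real.sqrt p : ℝ) : ℂ) with hrp
  set r : ℂ := ((1 / Real.sqrt (p ^ 2 : ℕ) : ℝ) : ℂ) with hrr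
  clear_value rp r
  unfold KDQ proj
  simp only [Matrix.of_apply]
  -- pull ψ i out of the sum
  rw [show ∑ k, (psiPQ (p ^ 2) p p m s i * (starRingEnd ℂ) (psiPQ (p ^ 2) p p m s k)) *
        fourierVec (p ^ 2) j k
      = psiPQ (p ^ 2) p p m s i *
        ∑ k, (starRingEnd ℂ) (psiPQ (p ^ 2) p p m s k) * fourierVec (p ^ 2) j k by
    rw [Finset.mul_sum]; exact Finset.sum_congr rfl fun k _ => by ring]
  -- compute the inner sum T
  have hT : ∑ k, (starRingEnd ℂ) (psiPQ (p ^ 2) p p m s k) * fourierVec (p ^ 2) j k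
      = (rp * r * omega (p ^ 2) ^ ((m.val : ℤ) * (j.val : ℤ))) *
          (if (p : ℤ) ∣ ((j.val : ℤ) - (s.val : ℤ)) then (p : ℂ) else 0) := by
    rw [sum_grid hp]
    have hcol : ∀ t : Fin p, ∑ m' : Fin p,
        (starRingEnd ℂ) (psiPQ (p ^ 2) p p m s (fe p t m')) * fourierVec (p ^ 2) j (fe p t m')
        = (rp * r * omega (p ^ 2) ^ ((m.val : ℤ) * (j.val : ℤ))) *
            omega p ^ ((t.val : ℤ) * ((j.val : ℤ) - (s.val : ℤ))) := by
      intro t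
      rw [Finset.sum_eq_single m]
      · unfold psiPQ
        rw [fe_mod, fe_div hp, if_pos rfl]
        unfold fourierVec
        rw [_root_.map_mul, Complex.conj_ofReal, conj_omega_pow, ← hrp, ← hrr]
        rw [show (fe p t m).val = m.val + t.val * p from rfl]
        rw [← zpow_natCast (omega (p ^ 2)) ((m.val + t.val * p) * j.val)]
        push_cast
        rw [show (((m.val : ℤ) + (t.val : ℤ) * (p : ℤ)) * (j.val : ℤ))
            = (m.val : ℤ) * (j.val : ℤ) + (p : ℤ) * ((t.val : ℤ) * (j.val : ℤ)) by ring]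
        rw [zpow_add₀ hω, omega_sq_pow hp0]
        rw [mul_sub, zpow_sub₀ hωp, _root_.zpow_neg]
        rw [show ((s.val : ℤ) * (t.val : ℤ)) = (t.val : ℤ) * (s.val : ℤ) by ring]
        rw [div_eq_mul_inv]
        ring
      · intro m' _ hm'
        unfold psiPQ
        rw [fe_mod, if_neg (fun h => hm' (Fin.ext h)), _root_.map_zero, zero_mul]
      · simp
    rw [Finset.sum_congr rfl (fun t _ => hcol t), ← Finset.mul_sum, omega_geom_sum hp0]
  rw [hT]
  by_cases hi : i.val % p = m.val
  · by_cases hj : j.val % p = s.val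
    · rw [if_pos ((mod_dvd_iff hp j s).2 hj), if_pos (And.intro hi hj)]
      unfold psiPQ fourierVec
      rw [if_pos hi, _root_.map_mul, Complex.conj_ofReal, conj_omega_pow, ← hrp, ← hrr]
      rw [← zpow_natCast (omega p) (s.val * (i.val / p))]
      -- collect everything
      rw [show r * omega (p ^ 2) ^ (-((i.val * j.val : ℕ) : ℤ)) *
          (rp * omega p ^ ((s.val * (i.val / p) : ℕ) : ℤ) *
            ((rp * r * omega (p ^ 2) ^ ((m.val : ℤ) * (j.val : ℤ))) * (p : ℂ)))
          = (rp * rp) * (r * r) * (p : ℂ) *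
            (omega (p ^ 2) ^ (-((i.val * j.val : ℕ) : ℤ)) *
              (omega p ^ ((s.val * (i.val / p) : ℕ) : ℤ) *
                omega (p ^ 2) ^ ((m.val : ℤ) * (j.val : ℤ)))) by ring]
      have hphase : omega (p ^ 2) ^ (-((i.val * j.val : ℕ) : ℤ)) *
          (omega p ^ ((s.val * (i.val / p) : ℕ) : ℤ) *
            omega (p ^ 2) ^ ((m.val : ℤ) * (j.val : ℤ))) = 1 := by
        rw [← omega_sq_pow hp0 ((s.val * (i.val / p) : ℕ) : ℤ)]
        rw [omega_zpow_add, omega_zpow_add]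
        apply omega_zpow_eq_one hd
        obtain ⟨c, hc⟩ := (mod_dvd_iff hp j s).2 hj
        rw [Nat.cast_mul, Nat.cast_mul]
        generalize hK : ((i.val / p : ℕ) : ℤ) = K
        have hi' : (i.val : ℤ) = (m.val : ℤ) + K * (p : ℤ) := by
          have h := Nat.mod_add_div' i.val p
          rw [hi] at h
          rw [← h, Nat.cast_add, Nat.cast_mul, hK]
        have hj' : (j.val : ℤ) = (s.val : ℤ) + (p : ℤ) * c := by omega
        refine ⟨-(K * c), ?_⟩
        rw [hi', hj']
        push_cast
        ring
      rw [hphase, mul_one, hrp2, hr2]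
      have hpc : (p : ℂ) ≠ 0 := Nat.cast_ne_zero.2 hp0
      have hpc2 : (((p ^ 2 : ℕ)) : ℂ) ≠ 0 := Nat.cast_ne_zero.2 hd
      field_simp
    · have h1 : ¬((i.val % p = m.val) ∧ (j.val % p = s.val)) := fun h => hj h.2
      rw [if_neg ((not_congr (mod_dvd_iff hp j s)).2 hj), if_neg h1]
      simp
  · have h1 : ¬((i.val % p = m.val) ∧ (j.val % p = s.val)) := fun h => hi h.1
    rw [if_neg h1]
    unfold psiPQ
    rw [if_neg hi, zero_mul, mul_zero]

lemma isHermitian_proj {d : ℕ} (v : Fin d → ℂ) : (proj d v).IsHermitian := by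
  ext i k
  simp [Matrix.conjTranspose_apply, proj, mul_comm]

lemma posSemidef_proj {d : ℕ} (v : Fin d → ℂ) : (proj d v).PosSemidef := by
  refine Matrix.PosSemidef.of_dotProduct_mulVec_nonneg (isHermitian_proj v) fun x => ?_
  have hx : dotProduct (star x) ((proj d v) *ᵥ x)
      = star (∑ k, (starRingEnd ℂ) (v k) * x k) * (∑ k, (starRingEnd ℂ) (v k) * x k) := by
    have h1 : star (∑ k, (starRingEnd ℂ) (v k) * x k) = ∑ i, star (x i) * v i := by
      rw [star_sum]
      refine Finset.sum_congr rfl fun k _ => ?_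
      simp [star_mul', mul_comm]
    rw [h1, Finset.sum_mul_sum]
    simp only [dotProduct, mulVec, proj, Matrix.of_apply, Pi.star_apply]
    refine Finset.sum_congr rfl fun i _ => ?_
    rw [Finset.mul_sum]
    refine Finset.sum_congr rfl fun k _ => ?_
    ring
  rw [hx]
  exact star_mul_self_nonneg _

lemma trace_proj {d : ℕ} (v : Fin d → ℂ) :
    (proj d v).trace = ∑ i, v i * (starRingEnd ℂ) (v i) := by
  simp [Matrix.trace, Matrix.diag, proj]

lemma trace_projA {d : ℕ} (i0 : Fin d) : (proj d (stdVec d i0)).trace = 1 := by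
  rw [trace_proj, Finset.sum_eq_single i0]
  · simp [stdVec]
  · intro k _ hk
    simp [stdVec, hk]
  · simp

lemma trace_projB {d : ℕ} (hd : d ≠ 0) (j0 : Fin d) : (proj d (fourierVec d j0)).trace = 1 := by
  rw [trace_proj]
  have h : ∀ i : Fin d, fourierVec d j0 i * (starRingEnd ℂ) (fourierVec d j0 i) = ((d:ℂ))⁻¹ := by
    intro i
    rw [mul_comm]
    exact conj_fourier_mul_self j0 i
  simp only [h, Finset.sum_const, Finset.card_univ, Fintype.card_fin, nsmul_eq_mul]
  field_simp

lemma psi_fe {p : ℕ} (hp : 0 < p) (m s t m' : Fin p) :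
    psiPQ (p ^ 2) p p m s (fe p t m')
      = if m' = m then ((1 / Real.sqrt p : ℝ) : ℂ) * omega p ^ (s.val * t.val) else 0 := by
  unfold psiPQ
  rw [fe_mod, fe_div hp]
  by_cases h : m' = m
  · subst h; rw [if_pos rfl, if_pos rfl]
  · rw [if_neg (fun hh => h (Fin.ext hh)), if_neg h]

lemma trace_projC {p : ℕ} (hp : 0 < p) (m s : Fin p) :
    (proj (p ^ 2) (psiPQ (p ^ 2) p p m s)).trace = 1 := by
  have hp0 : p ≠ 0 := hp.ne'
  rw [trace_proj, sum_grid hp]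
  have h : ∀ t m' : Fin p, psiPQ (p ^ 2) p p m s (fe p t m') *
      (starRingEnd ℂ) (psiPQ (p ^ 2) p p m s (fe p t m'))
      = if m' = m then ((p:ℂ))⁻¹ else 0 := by
    intro t m'
    rw [psi_fe hp]
    by_cases h : m' = m
    · rw [if_pos h, if_pos h, _root_.map_mul, Complex.conj_ofReal, conj_omega_pow,
        show ((1 / Real.sqrt p : ℝ) : ℂ) * omega p ^ (s.val * t.val) *
          (((1 / Real.sqrt p : ℝ) : ℂ) * omega p ^ (-((s.val * t.val : ℕ) : ℤ))) =
        (((1 / Real.sqrt p : ℝ) : ℂ) * ((1 / Real.sqrt p : ℝ) : ℂ)) *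
          (omega p ^ (-((s.val * t.val : ℕ) : ℤ)) * omega p ^ ((s.val * t.val : ℕ) : ℤ)) by
          rw [← zpow_natCast (omega p) (s.val * t.val)]; ring]
      rw [omega_neg_mul, sqrt_term_sq, mul_one]
    · rw [if_neg h, if_neg h, zero_mul]
  simp only [h]
  rw [Finset.sum_congr rfl (fun t _ => Finset.sum_ite_eq' Finset.univ m
    (fun _ => ((p:ℂ))⁻¹))]
  simp only [Finset.mem_univ, if_pos, Finset.sum_const, Finset.card_univ, Fintype.card_fin,
    nsmul_eq_mul]
  field_simp

lemma KDQ_zero {d : ℕ} (i j : Fin d) : KDQ d 0 i j = 0 := by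
  simp [KDQ]

lemma KDQ_add {d : ℕ} (M N : Matrix (Fin d) (Fin d) ℂ) (i j : Fin d) :
    KDQ d (M + N) i j = KDQ d M i j + KDQ d N i j := by
  simp [KDQ, Matrix.add_apply, add_mul, Finset.sum_add_distrib, mul_add]

lemma KDQ_smul {d : ℕ} (a : ℝ) (M : Matrix (Fin d) (Fin d) ℂ) (i j : Fin d) :
    KDQ d (a • M) i j = (a : ℂ) * KDQ d M i j := by
  unfold KDQ
  simp only [Matrix.smul_apply, Complex.real_smul]
  rw [show (∑ k, ((a:ℂ) * M i k) * fourierVec d j k)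
      = (a:ℂ) * ∑ k, M i k * fourierVec d j k by
    rw [Finset.mul_sum]; exact Finset.sum_congr rfl fun k _ => by ring]
  ring

lemma KDQ_sum {d : ℕ} {ι : Type*} (T : Finset ι) (f : ι → Matrix (Fin d) (Fin d) ℂ)
    (i j : Fin d) : KDQ d (∑ t ∈ T, f t) i j = ∑ t ∈ T, KDQ d (f t) i j := by
  classical
  induction T using Finset.induction_on with
  | empty => simp [KDQ]
  | insert a s h ih => rw [Finset.sum_insert h, Finset.sum_insert h, KDQ_add, ih]

lemma KDQ_one {d : ℕ} (i j : Fin d) : KDQ d 1 i j = ((d:ℂ))⁻¹ := by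
  unfold KDQ
  rw [Finset.sum_eq_single i]
  · rw [Matrix.one_apply_eq, one_mul]
    exact conj_fourier_mul_self j i
  · intro k _ hk
    rw [Matrix.one_apply_ne (Ne.symm hk), zero_mul]
  · simp

lemma one_eq_sum_projA (d : ℕ) :
    (1 : Matrix (Fin d) (Fin d) ℂ) = ∑ i, proj d (stdVec d i) := by
  ext i k
  rw [Matrix.sum_apply]
  by_cases h : i = k
  · subst h
    rw [Matrix.one_apply_eq, Finset.sum_eq_single i]
    · simp [proj, stdVec]
    · intro i0 _ hi0
      simp [proj, stdVec, Ne.symm hi0]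
    · simp
  · rw [Matrix.one_apply_ne h]
    symm
    apply Finset.sum_eq_zero
    intro i0 _
    simp only [proj, Matrix.of_apply, stdVec]
    by_cases hi : i = i0
    · have hk : ¬(k = i0) := fun hh => h (hi.trans hh.symm)
      rw [if_neg hk, if_pos hi]
      simp
    · rw [if_neg hi, zero_mul]

lemma fourierVec_ne_zero {d : ℕ} (hd : d ≠ 0) (j i : Fin d) : fourierVec d j i ≠ 0 := by
  unfold fourierVec
  apply mul_ne_zero
  · rw [Complex.ofReal_ne_zero]
    apply one_div_ne_zero
    rw [Real.sqrt_ne_zero']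
    exact_mod_cast Nat.pos_of_ne_zero hd
  · exact pow_ne_zero _ (omega_ne_zero d)

lemma KDQ_inj {d : ℕ} (hd : d ≠ 0) {F G : Matrix (Fin d) (Fin d) ℂ}
    (h : ∀ i j, KDQ d F i j = KDQ d G i j) : F = G := by
  have hB : ∀ i j, (∑ k, F i k * fourierVec d j k) = ∑ k, G i k * fourierVec d j k := by
    intro i j
    have hne : (starRingEnd ℂ) (fourierVec d j i) ≠ 0 := by
      rw [show (starRingEnd ℂ) (fourierVec d j i) = star (fourierVec d j i) from rfl,
        star_ne_zero]
      exact fourierVec_ne_zero hd j i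
    have h' := h i j
    unfold KDQ at h'
    exact mul_left_cancel₀ hne h'
  set B : Matrix (Fin d) (Fin d) ℂ := Matrix.of fun k j => fourierVec d j k with hBdef
  have hFB : F * B = G * B := by
    ext i j
    simpa [Matrix.mul_apply, hBdef] using hB i j
  have hBB : B * Bᴴ = 1 := by
    ext k k'
    simp only [Matrix.mul_apply, Matrix.conjTranspose_apply, hBdef, Matrix.of_apply, Complex.star_def]
    have hterm : ∀ jj : Fin d, fourierVec d jj k * (starRingEnd ℂ) (fourierVec d jj k')
        = ((d:ℂ))⁻¹ * omega d ^ ((jj.val : ℤ) * ((k.val : ℤ) - (k'.val : ℤ))) := by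
      intro jj
      unfold fourierVec
      rw [_root_.map_mul, Complex.conj_ofReal, conj_omega_pow,
        ← zpow_natCast (omega d) (k.val * jj.val), ← sqrt_term_sq d]
      push_cast
      rw [mul_sub, zpow_sub₀ (omega_ne_zero d), _root_.zpow_neg]
      rw [show ((jj.val:ℤ) * (k.val:ℤ)) = (k.val:ℤ) * (jj.val:ℤ) by ring,
        show ((jj.val:ℤ) * (k'.val:ℤ)) = (k'.val:ℤ) * (jj.val:ℤ) by ring]
      rw [div_eq_mul_inv]
      ring
    rw [Finset.sum_congr rfl (fun jj _ => hterm jj), ← Finset.mul_sum,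
      omega_geom_sum hd]
    by_cases hk : k = k'
    · rw [if_pos ((fin_dvd_iff k k').2 hk), Matrix.one_apply, if_pos hk]
      field_simp
    · rw [if_neg (fun hh => hk ((fin_dvd_iff k k').1 hh)), Matrix.one_apply, if_neg hk, mul_zero]
  calc F = F * (B * Bᴴ) := by rw [hBB, mul_one]
    _ = (F * B) * Bᴴ := by rw [mul_assoc]
    _ = (G * B) * Bᴴ := by rw [hFB]
    _ = G * (B * Bᴴ) := by rw [mul_assoc]
    _ = G := by rw [hBB, mul_one]


abbrev Idx (p : ℕ) := (Fin (p ^ 2) ⊕ Fin (p ^ 2)) ⊕ (Fin p × Fin p)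

def gfun (p : ℕ) : Idx p → Matrix (Fin (p ^ 2)) (Fin (p ^ 2)) ℂ :=
  Sum.elim
    (Sum.elim (fun i => proj (p ^ 2) (stdVec (p ^ 2) i))
      (fun j => proj (p ^ 2) (fourierVec (p ^ 2) j)))
    (fun ms => proj (p ^ 2) (psiPQ (p ^ 2) p p ms.1 ms.2))

lemma range_gfun (p : ℕ) :
    Set.range (gfun p) = setA (p ^ 2) ∪ setB (p ^ 2) ∪ setC2 (p ^ 2) p := by
  unfold gfun
  rw [Set.Sum.elim_range, Set.Sum.elim_range]
  have hA : Set.range (fun i => proj (p ^ 2) (stdVec (p ^ 2) i)) = setA (p ^ 2) := by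
    ext M; simp [setA, Set.range, eq_comm]
  have hB : Set.range (fun j => proj (p ^ 2) (fourierVec (p ^ 2) j)) = setB (p ^ 2) := by
    ext M; simp [setB, Set.range, eq_comm]
  have hC : Set.range (fun ms : Fin p × Fin p => proj (p ^ 2) (psiPQ (p ^ 2) p p ms.1 ms.2))
      = setC2 (p ^ 2) p := by
    ext M
    simp only [setC2, Set.mem_range, Set.mem_setOf_eq, Prod.exists]
    constructor
    · rintro ⟨m, s, rfl⟩; exact ⟨m, s, rfl⟩
    · rintro ⟨m, s, rfl⟩; exact ⟨m, s, rfl⟩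
  rw [hA, hB, hC]

lemma trace_gfun {p : ℕ} (hp : 0 < p) (t : Idx p) : (gfun p t).trace = 1 := by
  rcases t with (i | j) | ⟨m, s⟩
  · exact trace_projA i
  · exact trace_projB (pow_ne_zero 2 hp.ne') j
  · exact trace_projC hp m s

def mres {p : ℕ} (hp : 0 < p) (i : Fin (p ^ 2)) : Fin p := ⟨i.val % p, Nat.mod_lt _ hp⟩

lemma KDQ_combo {p : ℕ} (hp : 0 < p) (c : Idx p → ℝ) (i j : Fin (p ^ 2)) :
    KDQ (p ^ 2) (∑ t, c t • gfun p t) i j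
      = (((c (Sum.inl (Sum.inl i)) + c (Sum.inl (Sum.inr j)) +
          c (Sum.inr (mres hp i, mres hp j)) : ℝ)) : ℂ) * (((p ^ 2 : ℕ) : ℂ))⁻¹ := by
  rw [KDQ_sum]
  rw [Finset.sum_congr rfl (fun t _ => KDQ_smul (c t) (gfun p t) i j)]
  rw [Fintype.sum_sum_type, Fintype.sum_sum_type]
  have h1 : ∑ i0 : Fin (p ^ 2), (c (Sum.inl (Sum.inl i0)) : ℂ) *
        KDQ (p ^ 2) (gfun p (Sum.inl (Sum.inl i0))) i j
      = (c (Sum.inl (Sum.inl i)) : ℂ) * (((p ^ 2 : ℕ) : ℂ))⁻¹ := by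
    have hterm : ∀ i0 : Fin (p ^ 2), (c (Sum.inl (Sum.inl i0)) : ℂ) *
        KDQ (p ^ 2) (gfun p (Sum.inl (Sum.inl i0))) i j
        = if i = i0 then (c (Sum.inl (Sum.inl i0)) : ℂ) * (((p ^ 2 : ℕ) : ℂ))⁻¹ else 0 := by
      intro i0
      rw [show gfun p (Sum.inl (Sum.inl i0)) = proj (p ^ 2) (stdVec (p ^ 2) i0) from rfl,
        KDQ_projA]
      by_cases h : i = i0 <;> simp [h]
    rw [Finset.sum_congr rfl (fun i0 _ => hterm i0), Finset.sum_ite_eq Finset.univ i]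
    simp
  have h2 : ∑ j0 : Fin (p ^ 2), (c (Sum.inl (Sum.inr j0)) : ℂ) *
        KDQ (p ^ 2) (gfun p (Sum.inl (Sum.inr j0))) i j
      = (c (Sum.inl (Sum.inr j)) : ℂ) * (((p ^ 2 : ℕ) : ℂ))⁻¹ := by
    have hterm : ∀ j0 : Fin (p ^ 2), (c (Sum.inl (Sum.inr j0)) : ℂ) *
        KDQ (p ^ 2) (gfun p (Sum.inl (Sum.inr j0))) i j
        = if j = j0 then (c (Sum.inl (Sum.inr j0)) : ℂ) * (((p ^ 2 : ℕ) : ℂ))⁻¹ else 0 := by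
      intro j0
      rw [show gfun p (Sum.inl (Sum.inr j0)) = proj (p ^ 2) (fourierVec (p ^ 2) j0) from rfl,
        KDQ_projB (pow_ne_zero 2 hp.ne')]
      by_cases h : j = j0 <;> simp [h]
    rw [Finset.sum_congr rfl (fun j0 _ => hterm j0), Finset.sum_ite_eq Finset.univ j]
    simp
  have h3 : ∑ ms : Fin p × Fin p, (c (Sum.inr ms) : ℂ) *
        KDQ (p ^ 2) (gfun p (Sum.inr ms)) i j
      = (c (Sum.inr (mres hp i, mres hp j)) : ℂ) * (((p ^ 2 : ℕ) : ℂ))⁻¹ := by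
    have hterm : ∀ ms : Fin p × Fin p, (c (Sum.inr ms) : ℂ) *
        KDQ (p ^ 2) (gfun p (Sum.inr ms)) i j
        = if (mres hp i, mres hp j) = ms then
            (c (Sum.inr ms) : ℂ) * (((p ^ 2 : ℕ) : ℂ))⁻¹ else 0 := by
      intro ms
      rw [show gfun p (Sum.inr ms) = proj (p ^ 2) (psiPQ (p ^ 2) p p ms.1 ms.2) from rfl,
        KDQ_projC hp]
      by_cases h : (mres hp i, mres hp j) = ms
      · rw [← h]
        rw [if_pos ⟨rfl, rfl⟩, if_pos rfl]
      · rw [if_neg (fun hc => h (Prod.ext (Fin.ext hc.1) (Fin.ext hc.2))), mul_zero,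
          if_neg h]
    rw [Finset.sum_congr rfl (fun ms _ => hterm ms),
      Finset.sum_ite_eq Finset.univ (mres hp i, mres hp j)]
    simp
  rw [h1, h2, h3]
  push_cast
  ring

lemma trace_combo {p : ℕ} (hp : 0 < p) (c : Idx p → ℝ) :
    (∑ t, c t • gfun p t).trace = ((∑ t, c t : ℝ) : ℂ) := by
  rw [Matrix.trace_sum]
  have h : ∀ t : Idx p, (c t • gfun p t).trace = ((c t : ℝ) : ℂ) := by
    intro t
    rw [Matrix.trace_smul, trace_gfun hp]
    simp [Complex.real_smul]
  rw [Finset.sum_congr rfl (fun t _ => h t)]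
  rw [Complex.ofReal_sum]

lemma dinv_eq (n : ℕ) : ((n : ℂ))⁻¹ = (((n : ℝ)⁻¹ : ℝ) : ℂ) := by
  push_cast
  ring

lemma isHermitian_real_smul {d : ℕ} {M : Matrix (Fin d) (Fin d) ℂ} (h : M.IsHermitian)
    (a : ℝ) : (a • M).IsHermitian := by
  show _ᴴ = _
  rw [Matrix.conjTranspose_smul, star_trivial, h.eq]

lemma posSemidef_real_smul {d : ℕ} {M : Matrix (Fin d) (Fin d) ℂ} (h : M.PosSemidef)
    {a : ℝ} (ha : 0 ≤ a) : (a • M).PosSemidef := by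
  refine Matrix.PosSemidef.of_dotProduct_mulVec_nonneg (isHermitian_real_smul h.1 a) fun x => ?_
  rw [Matrix.smul_mulVec, dotProduct_smul, Complex.real_smul]
  exact mul_nonneg (Complex.zero_le_real.2 ha) (h.dotProduct_mulVec_nonneg x)

lemma posSemidef_add {d : ℕ} {M N : Matrix (Fin d) (Fin d) ℂ} (hM : M.PosSemidef)
    (hN : N.PosSemidef) : (M + N).PosSemidef := by
  refine Matrix.PosSemidef.of_dotProduct_mulVec_nonneg (hM.1.add hN.1) fun x => ?_
  rw [Matrix.add_mulVec, dotProduct_add]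
  exact add_nonneg (hM.dotProduct_mulVec_nonneg x) (hN.dotProduct_mulVec_nonneg x)

lemma KDQ_gfun_cases {p : ℕ} (hp : 0 < p) (t : Idx p) (i j : Fin (p ^ 2)) :
    KDQ (p ^ 2) (gfun p t) i j = 0 ∨ KDQ (p ^ 2) (gfun p t) i j = (((p ^ 2 : ℕ) : ℂ))⁻¹ := by
  rcases t with (i0 | j0) | ⟨m, s⟩
  · rw [show gfun p (Sum.inl (Sum.inl i0)) = proj (p ^ 2) (stdVec (p ^ 2) i0) from rfl,
      KDQ_projA]
    split_ifs <;> [right; left] <;> rfl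
  · rw [show gfun p (Sum.inl (Sum.inr j0)) = proj (p ^ 2) (fourierVec (p ^ 2) j0) from rfl,
      KDQ_projB (pow_ne_zero 2 hp.ne')]
    split_ifs <;> [right; left] <;> rfl
  · rw [show gfun p (Sum.inr (m, s)) = proj (p ^ 2) (psiPQ (p ^ 2) p p m s) from rfl,
      KDQ_projC hp]
    split_ifs <;> [right; left] <;> rfl

lemma isHermitian_gfun {p : ℕ} (t : Idx p) : (gfun p t).IsHermitian := by
  rcases t with (i0 | j0) | ⟨m, s⟩ <;> exact isHermitian_proj _

lemma posSemidef_gfun {p : ℕ} (t : Idx p) : (gfun p t).PosSemidef := by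
  rcases t with (i0 | j0) | ⟨m, s⟩ <;> exact posSemidef_proj _

lemma gfun_mem_KDr {p : ℕ} (hp : 0 < p) (t : Idx p) : gfun p t ∈ KDr (p ^ 2) := by
  refine ⟨isHermitian_gfun t, fun i j => ?_⟩
  rcases KDQ_gfun_cases hp t i j with h | h <;> rw [h]
  · rfl
  · rw [dinv_eq]
    exact Complex.ofReal_im _

lemma gfun_mem_KDplus {p : ℕ} (hp : 0 < p) (t : Idx p) : gfun p t ∈ KDplus (p ^ 2) := by
  refine ⟨posSemidef_gfun t, trace_gfun hp t, fun i j => ?_⟩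
  rcases KDQ_gfun_cases hp t i j with h | h <;> rw [h]
  · simp
  · rw [dinv_eq]
    constructor
    · exact Complex.ofReal_im _
    · rw [Complex.ofReal_re]
      positivity

def KDrSub (d : ℕ) : Submodule ℝ (Matrix (Fin d) (Fin d) ℂ) where
  carrier := KDr d
  add_mem' := fun hF hG => ⟨hF.1.add hG.1, fun i j => by
    rw [KDQ_add, Complex.add_im, hF.2 i j, hG.2 i j, add_zero]⟩
  zero_mem' := ⟨Matrix.isHermitian_zero, fun i j => by rw [KDQ_zero]; rfl⟩
  smul_mem' := fun a F hF => ⟨isHermitian_real_smul hF.1 a, fun i j => by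
    rw [KDQ_smul, Complex.mul_im, hF.2 i j, Complex.ofReal_im]
    ring⟩

lemma convex_KDplus (d : ℕ) : Convex ℝ (KDplus d) := by
  intro ρ hρ σ hσ a b ha hb hab
  refine ⟨posSemidef_add (posSemidef_real_smul hρ.1 ha) (posSemidef_real_smul hσ.1 hb),
    ?_, fun i j => ?_⟩
  · rw [Matrix.trace_add, Matrix.trace_smul, Matrix.trace_smul, hρ.2.1, hσ.2.1]
    rw [Complex.real_smul, Complex.real_smul, mul_one, mul_one, ← Complex.ofReal_add, hab,
      Complex.ofReal_one]
  · rw [KDQ_add, KDQ_smul, KDQ_smul]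
    obtain ⟨h1, h2⟩ := hρ.2.2 i j
    obtain ⟨h3, h4⟩ := hσ.2.2 i j
    constructor
    · rw [Complex.add_im, Complex.mul_im, Complex.mul_im, h1, h3]
      simp
    · rw [Complex.add_re, Complex.mul_re, Complex.mul_re, h1, h3]
      simp only [Complex.ofReal_re, Complex.ofReal_im, mul_zero, zero_mul, sub_zero, add_zero]
      exact add_nonneg (mul_nonneg ha h2) (mul_nonneg hb h4)

lemma hard_dir {p : ℕ} (hp : 0 < p)
    (hspan : KDr (p ^ 2) =
      (Submodule.span ℝ (setA (p ^ 2) ∪ setB (p ^ 2) ∪ setC2 (p ^ 2) p) :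
        Set (Matrix (Fin (p ^ 2)) (Fin (p ^ 2)) ℂ))) :
    KDplus (p ^ 2) = convexHull ℝ (setA (p ^ 2) ∪ setB (p ^ 2) ∪ setC2 (p ^ 2) p) := by
  haveI : Nonempty (Fin p) := ⟨⟨0, hp⟩⟩
  apply Set.Subset.antisymm
  · intro ρ hρ
    have hρr : ρ ∈ KDr (p ^ 2) := ⟨hρ.1.1, fun i j => (hρ.2.2 i j).1⟩
    rw [hspan, ← range_gfun] at hρr
    obtain ⟨c, hc⟩ := (Submodule.mem_span_range_iff_exists_fun ℝ).1 hρr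
    set X : Fin p → ℝ := fun m => Finset.univ.inf' Finset.univ_nonempty
      (fun k : Fin p => c (Sum.inl (Sum.inl (fe p k m)))) with hX
    set Y : Fin p → ℝ := fun s => Finset.univ.inf' Finset.univ_nonempty
      (fun k : Fin p => c (Sum.inl (Sum.inr (fe p k s)))) with hY
    set c' : Idx p → ℝ := fun t => match t with
      | Sum.inl (Sum.inl i) => c (Sum.inl (Sum.inl i)) - X (mres hp i)
      | Sum.inl (Sum.inr j) => c (Sum.inl (Sum.inr j)) - Y (mres hp j)
      | Sum.inr ms => c (Sum.inr ms) + X ms.1 + Y ms.2 with hc'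
    have hXle : ∀ i : Fin (p ^ 2), X (mres hp i) ≤ c (Sum.inl (Sum.inl i)) := by
      intro i
      have hlt : i.val / p < p := Nat.div_lt_iff_lt_mul hp |>.2 (by
        have := i.isLt; rwa [← pow_two])
      have h1 := Finset.inf'_le (fun k : Fin p => c (Sum.inl (Sum.inl (fe p k (mres hp i)))))
        (Finset.mem_univ (⟨i.val / p, hlt⟩ : Fin p))
      have h2 : fe p (⟨i.val / p, hlt⟩ : Fin p) (mres hp i) = i :=
        Fin.ext (Nat.mod_add_div' i.val p)
      rw [h2] at h1
      rw [hX]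
      exact h1
    have hYle : ∀ j : Fin (p ^ 2), Y (mres hp j) ≤ c (Sum.inl (Sum.inr j)) := by
      intro j
      have hlt : j.val / p < p := Nat.div_lt_iff_lt_mul hp |>.2 (by
        have := j.isLt; rwa [← pow_two])
      have h1 := Finset.inf'_le (fun k : Fin p => c (Sum.inl (Sum.inr (fe p k (mres hp j)))))
        (Finset.mem_univ (⟨j.val / p, hlt⟩ : Fin p))
      have h2 : fe p (⟨j.val / p, hlt⟩ : Fin p) (mres hp j) = j :=
        Fin.ext (Nat.mod_add_div' j.val p)
      rw [h2] at h1
      rw [hY]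
      exact h1
    have hq : ∀ i j : Fin (p ^ 2),
        0 ≤ c (Sum.inl (Sum.inl i)) + c (Sum.inl (Sum.inr j)) +
          c (Sum.inr (mres hp i, mres hp j)) := by
      intro i j
      have h1 := (hρ.2.2 i j).2
      have h2 : KDQ (p ^ 2) ρ i j
          = (((c (Sum.inl (Sum.inl i)) + c (Sum.inl (Sum.inr j)) +
              c (Sum.inr (mres hp i, mres hp j)) : ℝ)) : ℂ) * (((p ^ 2 : ℕ) : ℂ))⁻¹ := by
        rw [← hc]; exact KDQ_combo hp c i j
      rw [h2, dinv_eq, ← Complex.ofReal_mul, Complex.ofReal_re] at h1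
      have hdpos : (0 : ℝ) < (((p ^ 2 : ℕ) : ℝ))⁻¹ := by positivity
      exact (mul_nonneg_iff_of_pos_right hdpos).1 h1
    have hcombo : ∑ t, c' t • gfun p t = ρ := by
      apply KDQ_inj (pow_ne_zero 2 hp.ne')
      intro i j
      rw [KDQ_combo hp c', ← hc, KDQ_combo hp c]
      congr 1
      rw [Complex.ofReal_inj]
      simp only [hc']
      ring
    have hc'0 : ∀ t, 0 ≤ c' t := by
      intro t
      rcases t with (i | j) | ⟨m, s⟩
      · simp only [hc']
        exact sub_nonneg.2 (hXle i)
      · simp only [hc']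
        exact sub_nonneg.2 (hYle j)
      · simp only [hc']
        obtain ⟨k0, _, hk0⟩ := Finset.exists_mem_eq_inf' (Finset.univ_nonempty)
          (fun k : Fin p => c (Sum.inl (Sum.inl (fe p k m))))
        obtain ⟨l0, _, hl0⟩ := Finset.exists_mem_eq_inf' (Finset.univ_nonempty)
          (fun k : Fin p => c (Sum.inl (Sum.inr (fe p k s))))
        have h := hq (fe p k0 m) (fe p l0 s)
        have hm : mres hp (fe p k0 m) = m := Fin.ext (fe_mod k0 m)
        have hs : mres hp (fe p l0 s) = s := Fin.ext (fe_mod l0 s)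
        rw [hm, hs] at h
        have hXm : X m = c (Sum.inl (Sum.inl (fe p k0 m))) := by rw [hX]; exact hk0
        have hYs : Y s = c (Sum.inl (Sum.inr (fe p l0 s))) := by rw [hY]; exact hl0
        rw [hXm, hYs]
        linarith
    have hsumc : ∑ t, c t = 1 := by
      have h := trace_combo hp c
      rw [hc, hρ.2.1] at h
      exact_mod_cast h.symm
    have hsumc' : ∑ t, c' t = 1 := by
      rw [← hsumc]
      rw [Fintype.sum_sum_type, Fintype.sum_sum_type, Fintype.sum_sum_type,
        Fintype.sum_sum_type]
      simp only [hc']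
      rw [Finset.sum_sub_distrib, Finset.sum_sub_distrib]
      have hXsum : ∑ i : Fin (p ^ 2), X (mres hp i) = ∑ ms : Fin p × Fin p, X ms.1 := by
        rw [sum_grid hp (fun i => X (mres hp i)), Fintype.sum_prod_type, Finset.sum_comm]
        apply Finset.sum_congr rfl
        intro m _
        apply Finset.sum_congr rfl
        intro k _
        rw [show mres hp (fe p k m) = m from Fin.ext (fe_mod k m)]
      have hYsum : ∑ j : Fin (p ^ 2), Y (mres hp j) = ∑ ms : Fin p × Fin p, Y ms.2 := by
        rw [sum_grid hp (fun j => Y (mres hp j)), Fintype.sum_prod_type]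
        apply Finset.sum_congr rfl
        intro k _
        apply Finset.sum_congr rfl
        intro m _
        rw [show mres hp (fe p k m) = m from Fin.ext (fe_mod k m)]
      rw [hXsum, hYsum]
      rw [show (∑ ms : Fin p × Fin p, (c (Sum.inr ms) + X ms.1 + Y ms.2))
          = (∑ ms : Fin p × Fin p, c (Sum.inr ms)) + (∑ ms : Fin p × Fin p, X ms.1)
            + (∑ ms : Fin p × Fin p, Y ms.2) by
        rw [← Finset.sum_add_distrib, ← Finset.sum_add_distrib]]
      ring
    have hmem : ∀ t : Idx p, gfun p t ∈ setA (p ^ 2) ∪ setB (p ^ 2) ∪ setC2 (p ^ 2) p := by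
      intro t
      rw [← range_gfun]
      exact ⟨t, rfl⟩
    have hcm := Finset.centerMass_mem_convexHull (Finset.univ : Finset (Idx p))
      (fun t _ => hc'0 t) (by rw [hsumc']; norm_num) (fun t _ => hmem t)
    rwa [Finset.centerMass_eq_of_sum_1 _ _ hsumc', hcombo] at hcm
  · refine convexHull_min (fun M hM => ?_) (convex_KDplus _)
    rw [← range_gfun] at hM
    obtain ⟨t, rfl⟩ := hM
    exact gfun_mem_KDplus hp t

lemma easy_dir {p : ℕ} (hp : 0 < p)
    (hconv : KDplus (p ^ 2) = convexHull ℝ (setA (p ^ 2) ∪ setB (p ^ 2) ∪ setC2 (p ^ 2) p)) :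
    KDr (p ^ 2) =
      (Submodule.span ℝ (setA (p ^ 2) ∪ setB (p ^ 2) ∪ setC2 (p ^ 2) p) :
        Set (Matrix (Fin (p ^ 2)) (Fin (p ^ 2)) ℂ)) := by
  have hd : (p ^ 2) ≠ 0 := pow_ne_zero 2 hp.ne'
  have hdR : (0 : ℝ) < ((p ^ 2 : ℕ) : ℝ) := by positivity
  apply Set.Subset.antisymm
  · intro F hF
    have hH : F.IsHermitian := hF.1
    set lam : Fin (p ^ 2) → ℝ := hH.eigenvalues with hlam
    set U : Matrix (Fin (p ^ 2)) (Fin (p ^ 2)) ℂ := (hH.eigenvectorUnitary :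
      Matrix (Fin (p ^ 2)) (Fin (p ^ 2)) ℂ) with hU
    have hspec : F = U * Matrix.diagonal (RCLike.ofReal ∘ lam) * star U := hH.spectral_theorem
    set t : ℝ := 1 + (∑ i, |lam i|) +
      ((p ^ 2 : ℕ) : ℝ) * ∑ i, ∑ j, |(KDQ (p ^ 2) F i j).re| with hts
    have hqnn : (0:ℝ) ≤ ∑ i, ∑ j, |(KDQ (p ^ 2) F i j).re| :=
      Finset.sum_nonneg fun _ _ => Finset.sum_nonneg fun _ _ => abs_nonneg _
    have hlnn : (0:ℝ) ≤ ∑ i, |lam i| := Finset.sum_nonneg fun _ _ => abs_nonneg _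
    have hqsum : ∀ i j, |(KDQ (p ^ 2) F i j).re| ≤ ∑ i, ∑ j, |(KDQ (p ^ 2) F i j).re| := by
      intro i j
      calc |(KDQ (p ^ 2) F i j).re| ≤ ∑ j, |(KDQ (p ^ 2) F i j).re| :=
            Finset.single_le_sum (f := fun j => |(KDQ (p ^ 2) F i j).re|)
              (fun _ _ => abs_nonneg _) (Finset.mem_univ j)
        _ ≤ ∑ i, ∑ j, |(KDQ (p ^ 2) F i j).re| :=
            Finset.single_le_sum (f := fun i => ∑ j, |(KDQ (p ^ 2) F i j).re|)
              (fun _ _ => Finset.sum_nonneg fun _ _ => abs_nonneg _) (Finset.mem_univ i)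
    have habs : ∀ i, |lam i| ≤ ∑ i, |lam i| :=
      fun i => Finset.single_le_sum (f := fun i => |lam i|)
        (fun _ _ => abs_nonneg _) (Finset.mem_univ i)
    have ht0 : 0 ≤ t := by
      rw [hts]
      positivity
    set G : Matrix (Fin (p ^ 2)) (Fin (p ^ 2)) ℂ := F + t • (1 : Matrix _ _ ℂ) with hG
    have hsmul1 : t • (1 : Matrix (Fin (p ^ 2)) (Fin (p ^ 2)) ℂ)
        = Matrix.diagonal (fun _ => ((t : ℝ) : ℂ)) := by
      ext i k
      by_cases h : i = k
      · subst h
        simp [Matrix.smul_apply, Matrix.one_apply_eq, Matrix.diagonal, Complex.real_smul]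
      · simp [Matrix.smul_apply, Matrix.one_apply_ne h, Matrix.diagonal, h]
    have hUU : U * star U = 1 := (Matrix.mem_unitaryGroup_iff).mp hH.eigenvectorUnitary.2
    have hUU' : star U * U = 1 := (Matrix.mem_unitaryGroup_iff').mp hH.eigenvectorUnitary.2
    have hGdiag : G = U * Matrix.diagonal (fun i => ((lam i + t : ℝ) : ℂ)) * star U := by
      have h1 : U * (t • (1 : Matrix (Fin (p ^ 2)) (Fin (p ^ 2)) ℂ)) * star U
          = t • (1 : Matrix (Fin (p ^ 2)) (Fin (p ^ 2)) ℂ) := by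
        rw [Matrix.mul_smul, Matrix.smul_mul, mul_one, hUU]
      calc G = U * Matrix.diagonal (RCLike.ofReal ∘ lam) * star U
            + U * (t • (1 : Matrix _ _ ℂ)) * star U := by rw [hG, ← hspec, h1]
        _ = U * (Matrix.diagonal (RCLike.ofReal ∘ lam) + t • (1 : Matrix _ _ ℂ)) * star U := by
            rw [Matrix.mul_add, Matrix.add_mul]
        _ = U * Matrix.diagonal (fun i => ((lam i + t : ℝ) : ℂ)) * star U := by
            rw [hsmul1, Matrix.diagonal_add]
            congr 2
            funext i
            simp only [Function.comp]
            push_cast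
            rfl
    have hGpsd : G.PosSemidef := by
      rw [hGdiag, Matrix.star_eq_conjTranspose]
      apply Matrix.PosSemidef.mul_mul_conjTranspose_same
      refine Matrix.posSemidef_diagonal_iff.2 fun i => ?_
      apply Complex.zero_le_real.2
      have h1 := habs i
      have h2 := neg_abs_le (lam i)
      have h3 : 0 ≤ ((p ^ 2 : ℕ) : ℝ) * ∑ i, ∑ j, |(KDQ (p ^ 2) F i j).re| :=
        mul_nonneg hdR.le hqnn
      rw [hts]
      linarith
    have htrF : F.trace = ((∑ i, lam i : ℝ) : ℂ) := by
      rw [hspec, Matrix.trace_mul_cycle, hUU', one_mul, Matrix.trace_diagonal]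
      rw [Complex.ofReal_sum]
      rfl
    set cc : ℝ := (∑ i, lam i) + t * ((p ^ 2 : ℕ) : ℝ) with hcc
    have htrG : G.trace = ((cc : ℝ) : ℂ) := by
      rw [hG, Matrix.trace_add, Matrix.trace_smul, Matrix.trace_one, htrF, hcc]
      simp only [Fintype.card_fin]
      rw [Complex.real_smul]
      push_cast
      ring
    have hccpos : 0 < cc := by
      have h1 : -(∑ i, |lam i|) ≤ ∑ i, lam i := by
        have h := Finset.sum_le_sum (fun i (_ : i ∈ Finset.univ) => neg_abs_le (lam i))
        rwa [Finset.sum_neg_distrib] at h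
      have h2 : t ≤ t * ((p ^ 2 : ℕ) : ℝ) :=
        le_mul_of_one_le_right ht0 (by exact_mod_cast Nat.one_le_iff_ne_zero.2 hd)
      have h3 : 0 ≤ ((p ^ 2 : ℕ) : ℝ) * ∑ i, ∑ j, |(KDQ (p ^ 2) F i j).re| :=
        mul_nonneg hdR.le hqnn
      rw [hcc]
      rw [hts] at h2 ⊢
      linarith
    set ρ : Matrix (Fin (p ^ 2)) (Fin (p ^ 2)) ℂ := cc⁻¹ • G with hρdef
    have hρplus : ρ ∈ KDplus (p ^ 2) := by
      refine ⟨posSemidef_real_smul hGpsd (inv_nonneg.2 hccpos.le), ?_, fun i j => ?_⟩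
      · rw [hρdef, Matrix.trace_smul, htrG, Complex.real_smul, ← Complex.ofReal_mul,
          inv_mul_cancel₀ hccpos.ne', Complex.ofReal_one]
      · set q : ℝ := (KDQ (p ^ 2) F i j).re with hqdef
        have hq' : KDQ (p ^ 2) F i j = (q : ℂ) :=
          Complex.ext (by rw [Complex.ofReal_re]) (by rw [Complex.ofReal_im]; exact hF.2 i j)
        have hQρ : KDQ (p ^ 2) ρ i j
            = ((cc⁻¹ * (q + t * (((p ^ 2 : ℕ) : ℝ))⁻¹) : ℝ) : ℂ) := by
          rw [hρdef, KDQ_smul, hG, KDQ_add, KDQ_smul, KDQ_one, hq', dinv_eq]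
          push_cast
          ring
        rw [hQρ]
        refine ⟨Complex.ofReal_im _, ?_⟩
        rw [Complex.ofReal_re]
        have habsq : |q| * ((p ^ 2 : ℕ) : ℝ) ≤ t := by
          have h5 := hqsum i j
          rw [← hqdef] at h5
          have h6 : |q| * ((p ^ 2 : ℕ) : ℝ)
              ≤ (∑ i, ∑ j, |(KDQ (p ^ 2) F i j).re|) * ((p ^ 2 : ℕ) : ℝ) :=
            mul_le_mul_of_nonneg_right h5 hdR.le
          rw [mul_comm (∑ i, ∑ j, |(KDQ (p ^ 2) F i j).re|) (((p ^ 2 : ℕ) : ℝ))] at h6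
          rw [hts]
          linarith
        have h9 : |q| ≤ t * (((p ^ 2 : ℕ) : ℝ))⁻¹ := by
          rw [← div_eq_mul_inv]
          exact (le_div_iff₀ hdR).2 habsq
        have h10 := neg_abs_le q
        have h11 : 0 ≤ q + t * (((p ^ 2 : ℕ) : ℝ))⁻¹ := by linarith
        exact mul_nonneg (inv_nonneg.2 hccpos.le) h11
    have hρspan : ρ ∈ Submodule.span ℝ (setA (p ^ 2) ∪ setB (p ^ 2) ∪ setC2 (p ^ 2) p) := by
      have h1 : ρ ∈ convexHull ℝ (setA (p ^ 2) ∪ setB (p ^ 2) ∪ setC2 (p ^ 2) p) := by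
        rw [← hconv]; exact hρplus
      exact convexHull_min Submodule.subset_span (Submodule.convex _) h1
    have h1span : (1 : Matrix (Fin (p ^ 2)) (Fin (p ^ 2)) ℂ)
        ∈ Submodule.span ℝ (setA (p ^ 2) ∪ setB (p ^ 2) ∪ setC2 (p ^ 2) p) := by
      rw [one_eq_sum_projA]
      refine Submodule.sum_mem _ fun i _ => Submodule.subset_span ?_
      exact Set.mem_union_left _ (Set.mem_union_left _ ⟨i, rfl⟩)
    have hGspan : G ∈ Submodule.span ℝ (setA (p ^ 2) ∪ setB (p ^ 2) ∪ setC2 (p ^ 2) p) := by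
      have h2 : G = cc • ρ := by
        rw [hρdef, smul_smul, mul_inv_cancel₀ hccpos.ne', one_smul]
      rw [h2]
      exact Submodule.smul_mem _ _ hρspan
    have hFG : F = G - t • (1 : Matrix (Fin (p ^ 2)) (Fin (p ^ 2)) ℂ) := by
      rw [hG, add_sub_cancel_right]
    show F ∈ (Submodule.span ℝ (setA (p ^ 2) ∪ setB (p ^ 2) ∪ setC2 (p ^ 2) p) :
      Submodule ℝ (Matrix (Fin (p ^ 2)) (Fin (p ^ 2)) ℂ))
    rw [hFG]
    exact Submodule.sub_mem _ hGspan (Submodule.smul_mem _ _ h1span)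
  · intro M hM
    have hle : Submodule.span ℝ (setA (p ^ 2) ∪ setB (p ^ 2) ∪ setC2 (p ^ 2) p)
        ≤ KDrSub (p ^ 2) := by
      apply Submodule.span_le.2
      intro M hM
      rw [← range_gfun] at hM
      obtain ⟨tt, rfl⟩ := hM
      exact gfun_mem_KDr hp tt
    exact hle hM

/-- For `d = p²` with `p` prime,
`KD^r = span_ℝ(A ∪ B ∪ C)` iff `KD⁺ = ConvHull(A ∪ B ∪ C)`. -/
theorem stmt3 (p d : ℕ) (hp : p.Prime) (hd : d = p ^ 2) :
    KDr d = (Submodule.span ℝ (setA d ∪ setB d ∪ setC2 d p) :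
        Set (Matrix (Fin d) (Fin d) ℂ)) ↔
      KDplus d = convexHull ℝ (setA d ∪ setB d ∪ setC2 d p) := by
  subst hd
  exact ⟨fun h => hard_dir hp.pos h, fun h => easy_dir hp.pos h⟩
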